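/- arXiv:2012.07106 — 3 statements merged into one kernel-verified Lean document; each statement's English description precedes it below -/
import Mathlib

section
/- Let à be an invertible n×n matrix and A = Ã^T Ã. For any symmetric matrix X, the matrix X̃ = Ã·Γ_A[X] is the unique matrix satisfying X̃^T Ã + Ã^T X̃ = X and Ã^{-1} X̃ = X̃^T Ã^{-T}. -/
open Matrix

/-- Uniqueness for the Lyapunov/Sylvester equation with positive definite coefficient:
if `A` is positive definite and `A D + D A = 0`, then `D = 0`. -/
lemma lyap_zero {n : ℕ} {A D : Matrix (Fin n) (Fin n) ℝ} (hA : A.PosDef)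
    (h : A * D + D * A = 0) : D = 0 := by
  have hH : A.IsHermitian := hA.isHermitian
  set U : Matrix (Fin n) (Fin n) ℝ := (hH.eigenvectorUnitary : Matrix (Fin n) (Fin n) ℝ) with hU
  have hU1 : U * star U = 1 := Matrix.mem_unitaryGroup_iff.mp hH.eigenvectorUnitary.2
  have hU2 : star U * U = 1 := Matrix.mem_unitaryGroup_iff'.mp hH.eigenvectorUnitary.2
  set d : Fin n → ℝ := hH.eigenvalues with hd
  have hspec : A = U * diagonal d * star U := by
    have := hH.spectral_theorem
    simpa [hU, hd, Function.comp] using this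
  set E : Matrix (Fin n) (Fin n) ℝ := star U * D * U with hE
  have key : diagonal d * E + E * diagonal d = 0 := by
    have h2 : star U * (A * D + D * A) * U = 0 := by rw [h]; simp
    calc diagonal d * E + E * diagonal d
        = star U * (A * D) * U + star U * (D * A) * U := by
          rw [hspec, hE]
          simp only [Matrix.mul_assoc]
          rw [hU2]
          simp only [Matrix.mul_one, ← Matrix.mul_assoc]
          congr 2
          rw [Matrix.mul_assoc (star U * U), hU2]
          simp [Matrix.mul_assoc]
      _ = star U * (A * D + D * A) * U := by noncomm_ring
      _ = 0 := h2
  have hEzero : E = 0 := by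
    ext i j
    have := congrFun (congrFun key i) j
    simp only [Matrix.add_apply, Matrix.diagonal_mul, Matrix.mul_diagonal,
      Matrix.zero_apply] at this
    have hdi : 0 < d i := hA.eigenvalues_pos i
    have hdj : 0 < d j := hA.eigenvalues_pos j
    have hsum : d i + d j ≠ 0 := by positivity
    have : (d i + d j) * E i j = 0 := by rw [add_mul]; linarith [this]
    simpa [Matrix.zero_apply] using (mul_eq_zero.mp this).resolve_left hsum
  have : D = U * E * star U := by
    rw [hE]
    simp only [← Matrix.mul_assoc, hU1, Matrix.one_mul]
    rw [Matrix.mul_assoc, hU1, Matrix.mul_one]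
  rw [this, hEzero]
  simp

lemma gram_posDef {n : ℕ} {At : Matrix (Fin n) (Fin n) ℝ} (hAt : IsUnit At.det) :
    (Atᵀ * At).PosDef := by
  have : Invertible At := At.invertibleOfIsUnitDet hAt
  refine Matrix.posDef_iff_dotProduct_mulVec.mpr ⟨?_, fun x hx => ?_⟩
  · simpa using Matrix.isHermitian_conjTranspose_mul_self At
  · have hinj : Function.Injective At.mulVec := Matrix.mulVec_injective_of_invertible At
    have hne : At.mulVec x ≠ 0 := by
      intro hzero
      apply hx
      apply hinj
      simpa using hzero
    have : dotProduct (star x) ((Atᵀ * At) *ᵥ x)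
        = dotProduct (At *ᵥ x) (At *ᵥ x) := by
      rw [← Matrix.mulVec_mulVec]
      rw [Matrix.dotProduct_mulVec]
      congr 1
      · simp [Matrix.vecMul_transpose]
    rw [this]
    have hnn : 0 ≤ dotProduct (At *ᵥ x) (At *ᵥ x) :=
      Finset.sum_nonneg fun i _ => mul_self_nonneg _
    rcases hnn.lt_or_eq with h | h
    · exact h
    · exact absurd (dotProduct_self_eq_zero.mp h.symm) hne

/-- For invertible `Ã` with `A = Ãᵀ Ã` and symmetric `X`, the matrix `X̃ = Ã · Γ_A[X]`
is the unique matrix satisfying `X̃ᵀ Ã + Ãᵀ X̃ = X` (lift condition) and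
`Ã⁻¹ X̃ = X̃ᵀ Ã⁻ᵀ` (horizontality). -/
theorem horizontal_lift_unique {n : ℕ} (At X Y : Matrix (Fin n) (Fin n) ℝ)
    (hAt : IsUnit At.det)
    (hX : Xᵀ = X)
    (hY : (Atᵀ * At) * Y + Y * (Atᵀ * At) = X) :
    ∀ W : Matrix (Fin n) (Fin n) ℝ,
      (Wᵀ * At + Atᵀ * W = X ∧ At⁻¹ * W = Wᵀ * (At⁻¹)ᵀ) ↔ W = At * Y := by
  have hPD := gram_posDef hAt
  set A := Atᵀ * At with hA
  have hAsymm : Aᵀ = A := by simp [hA, Matrix.transpose_mul]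
  have hinv1 : At⁻¹ * At = 1 := Matrix.nonsing_inv_mul At hAt
  have hinv2 : At * At⁻¹ = 1 := Matrix.mul_nonsing_inv At hAt
  -- Y is symmetric
  have hYsymm : Yᵀ = Y := by
    have htr : A * Yᵀ + Yᵀ * A = X := by
      have := congrArg Matrix.transpose hY
      simpa [Matrix.transpose_add, Matrix.transpose_mul, hAsymm, hX, add_comm] using this
    have hdiff : A * (Yᵀ - Y) + (Yᵀ - Y) * A = 0 := by
      rw [Matrix.mul_sub, Matrix.sub_mul]
      have : A * Yᵀ + Yᵀ * A - (A * Y + Y * A) = 0 := by rw [htr, hY]; simp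
      linear_combination (norm := noncomm_ring) this
    have := lyap_zero hPD hdiff
    linear_combination (norm := noncomm_ring) this
  intro W
  constructor
  · rintro ⟨hlift, hhor⟩
    have hWZ : W = At * (At⁻¹ * W) := by
      rw [← Matrix.mul_assoc, hinv2, Matrix.one_mul]
    have hZsymm : (At⁻¹ * W)ᵀ = At⁻¹ * W := by
      rw [Matrix.transpose_mul, Matrix.transpose_nonsing_inv, hhor,
        Matrix.transpose_nonsing_inv]
    have hZeq : A * (At⁻¹ * W) + (At⁻¹ * W) * A = X := by
      have hWT : Wᵀ = (At⁻¹ * W)ᵀ * Atᵀ := by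
        conv_lhs => rw [hWZ]
        rw [Matrix.transpose_mul]
      calc A * (At⁻¹ * W) + (At⁻¹ * W) * A
          = Atᵀ * (At * (At⁻¹ * W)) + (At⁻¹ * W)ᵀ * Atᵀ * At := by
            rw [hZsymm, hA]; simp only [Matrix.mul_assoc]
        _ = Wᵀ * At + Atᵀ * W := by
            rw [← hWZ, ← hWT]; abel
        _ = X := hlift
    have hdiff : A * (At⁻¹ * W - Y) + (At⁻¹ * W - Y) * A = 0 := by
      have h0 : A * (At⁻¹ * W) + (At⁻¹ * W) * A - (A * Y + Y * A) = 0 := by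
        rw [hZeq, hY]; simp
      linear_combination (norm := noncomm_ring) h0
    have hZY : At⁻¹ * W = Y := by
      have := lyap_zero hPD hdiff
      linear_combination (norm := noncomm_ring) this
    rw [hWZ, hZY]
  · rintro rfl
    constructor
    · calc (At * Y)ᵀ * At + Atᵀ * (At * Y)
          = Yᵀ * (Atᵀ * At) + (Atᵀ * At) * Y := by
            rw [Matrix.transpose_mul]; noncomm_ring
        _ = Y * A + A * Y := by rw [hYsymm, hA]
        _ = X := by rw [← hY]; abel
    · calc At⁻¹ * (At * Y) = Y := by rw [← Matrix.mul_assoc, hinv1, Matrix.one_mul]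
        _ = (At * Y)ᵀ * (At⁻¹)ᵀ := by
            rw [Matrix.transpose_mul, Matrix.mul_assoc, ← Matrix.transpose_mul, hinv1]
            simp [hYsymm]
end

section
/- For a symmetric positive definite matrix A and symmetric matrices X, Y, the Wasserstein inner product g_W(X,Y) = tr(Γ_A[Y]·A·Γ_A[X]) equals (1/2)·tr(Γ_A[Y]·X), and it defines a positive definite symmetric bilinear form on the space of symmetric matrices. -/
open Matrix

private lemma trace_form_eq {n : ℕ} (A M : Matrix (Fin n) (Fin n) ℝ) :
    (Mᵀ * A * M).trace = ∑ j, dotProduct (fun i => M i j) (A *ᵥ (fun i => M i j)) := by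
  simp only [Matrix.trace, Matrix.diag, Matrix.mul_apply, dotProduct, Matrix.mulVec,
    transpose_apply, Finset.mul_sum, Finset.sum_mul]
  refine Finset.sum_congr rfl fun j _ => ?_
  rw [Finset.sum_comm]
  refine Finset.sum_congr rfl fun i _ => Finset.sum_congr rfl fun k _ => by ring

private lemma trace_form_nonneg {n : ℕ} {A : Matrix (Fin n) (Fin n) ℝ} (hA : A.PosDef)
    (M : Matrix (Fin n) (Fin n) ℝ) : 0 ≤ (Mᵀ * A * M).trace := by
  rw [trace_form_eq]
  refine Finset.sum_nonneg fun j _ => ?_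
  by_cases h : (fun i => M i j) = 0
  · rw [h]; simp
  · exact le_of_lt (by simpa using hA.dotProduct_mulVec_pos h)

private lemma trace_form_pos {n : ℕ} {A : Matrix (Fin n) (Fin n) ℝ} (hA : A.PosDef)
    {M : Matrix (Fin n) (Fin n) ℝ} (hM : M ≠ 0) : 0 < (Mᵀ * A * M).trace := by
  rw [trace_form_eq]
  obtain ⟨i, j, hij⟩ : ∃ i j, M i j ≠ 0 := by
    by_contra h; push_neg at h; exact hM (by ext i j; simpa using h i j)
  refine Finset.sum_pos' (fun k _ => ?_) ⟨j, Finset.mem_univ j, ?_⟩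
  · by_cases h0 : (fun i => M i k) = 0
    · rw [h0]; simp
    · exact le_of_lt (by simpa using hA.dotProduct_mulVec_pos h0)
  · have hne : (fun i => M i j) ≠ 0 := fun h0 => hij (congrFun h0 i)
    simpa using hA.dotProduct_mulVec_pos hne

private lemma sylvester_unique {n : ℕ} {A : Matrix (Fin n) (Fin n) ℝ} (hA : A.PosDef)
    {G : Matrix (Fin n) (Fin n) ℝ} (h : A * G + G * A = 0) : G = 0 := by
  by_contra hG
  have h1 : 0 < (Gᵀ * A * G).trace := trace_form_pos hA hG
  have h2 : 0 ≤ ((Gᵀ)ᵀ * A * Gᵀ).trace := trace_form_nonneg hA Gᵀ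
  have key : (Gᵀ * (A * G + G * A)).trace = 0 := by rw [h, Matrix.mul_zero, trace_zero]
  rw [Matrix.mul_add, trace_add] at key
  have e1 : (Gᵀ * (A * G)).trace = (Gᵀ * A * G).trace := by rw [Matrix.mul_assoc]
  have e2 : (Gᵀ * (G * A)).trace = ((Gᵀ)ᵀ * A * Gᵀ).trace := by
    rw [transpose_transpose, Matrix.trace_mul_comm, Matrix.mul_assoc]
  rw [e1, e2] at key
  linarith

private lemma sylvester_symm {n : ℕ} {A : Matrix (Fin n) (Fin n) ℝ} (hA : A.PosDef)
    {G X : Matrix (Fin n) (Fin n) ℝ} (hX : Xᵀ = X) (h : A * G + G * A = X) : Gᵀ = G := by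
  have hAt : Aᵀ = A := Matrix.IsSymm.eq (by simpa using hA.isHermitian)
  have h2 : A * Gᵀ + Gᵀ * A = X := by
    have ht := congrArg Matrix.transpose h
    simp only [transpose_add, transpose_mul, hAt, hX] at ht
    rw [← ht]; abel
  have h0 : A * (G - Gᵀ) + (G - Gᵀ) * A = 0 := by
    rw [Matrix.mul_sub, Matrix.sub_mul,
      show A * G - A * Gᵀ + (G * A - Gᵀ * A)
        = (A * G + G * A) - (A * Gᵀ + Gᵀ * A) by abel, h, h2, sub_self]
  exact (sub_eq_zero.mp (sylvester_unique hA h0)).symm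

/-- The Wasserstein inner product `g_W(X,Y) = tr(Γ_A[Y]·A·Γ_A[X])` equals
`(1/2)·tr(Γ_A[Y]·X)`, and it is a positive definite symmetric bilinear form on
symmetric matrices. -/
theorem wasserstein_metric_props {n : ℕ} (A : Matrix (Fin n) (Fin n) ℝ) (hA : A.PosDef) :
    (∀ X Y GX GY : Matrix (Fin n) (Fin n) ℝ, Xᵀ = X → Yᵀ = Y →
        A * GX + GX * A = X → A * GY + GY * A = Y →
        (GY * A * GX).trace = (1/2) * (GY * X).trace) ∧
    -- symmetry
    (∀ X Y GX GY : Matrix (Fin n) (Fin n) ℝ, Xᵀ = X → Yᵀ = Y →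
        A * GX + GX * A = X → A * GY + GY * A = Y →
        (1/2) * (GY * X).trace = (1/2) * (GX * Y).trace) ∧
    -- bilinearity (in the first argument; symmetry gives the second)
    (∀ (c : ℝ) (X X' Y G GY : Matrix (Fin n) (Fin n) ℝ), Xᵀ = X → X'ᵀ = X' → Yᵀ = Y →
        A * G + G * A = X + c • X' → A * GY + GY * A = Y →
        ∀ GX GX' : Matrix (Fin n) (Fin n) ℝ,
          A * GX + GX * A = X → A * GX' + GX' * A = X' →
          (1/2) * (GY * (X + c • X')).trace
            = (1/2) * (GY * X).trace + c * ((1/2) * (GY * X').trace)) ∧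
    -- positive definiteness
    (∀ X GX : Matrix (Fin n) (Fin n) ℝ, Xᵀ = X → A * GX + GX * A = X → X ≠ 0 →
        0 < (1/2) * (GX * X).trace) := by
  have hAt : Aᵀ = A := Matrix.IsSymm.eq (by simpa using hA.isHermitian)
  have key : ∀ X Y GX GY : Matrix (Fin n) (Fin n) ℝ, Xᵀ = X → Yᵀ = Y →
      A * GX + GX * A = X → A * GY + GY * A = Y →
      (GY * A * GX).trace = (1/2) * (GY * X).trace := by
    intro X Y GX GY hX hY hGX hGY
    have hGXs : GXᵀ = GX := sylvester_symm hA hX hGX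
    have hGYs : GYᵀ = GY := sylvester_symm hA hY hGY
    have e : (GY * (GX * A)).trace = (GY * A * GX).trace := by
      rw [← Matrix.trace_transpose (GY * (GX * A)), transpose_mul, transpose_mul,
        hAt, hGXs, hGYs, Matrix.trace_mul_comm, Matrix.mul_assoc]
    rw [← hGX, Matrix.mul_add, trace_add, ← Matrix.mul_assoc, e]
    ring
  refine ⟨key, ?_, ?_, ?_⟩
  · intro X Y GX GY hX hY hGX hGY
    rw [← key X Y GX GY hX hY hGX hGY, ← key Y X GY GX hY hX hGY hGX]
    have hGXs : GXᵀ = GX := sylvester_symm hA hX hGX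
    have hGYs : GYᵀ = GY := sylvester_symm hA hY hGY
    rw [← Matrix.trace_transpose (GY * A * GX), transpose_mul, transpose_mul,
      hAt, hGXs, hGYs, Matrix.trace_mul_comm, Matrix.mul_assoc,
      Matrix.trace_mul_comm A (GY * GX), Matrix.trace_mul_cycle GX A GY]
  · intro c X X' Y G GY _ _ _ _ _ GX GX' _ _
    rw [Matrix.mul_add, trace_add, Matrix.mul_smul, trace_smul]
    simp only [smul_eq_mul]
    ring
  · intro X GX hX hGX hX0
    have hGXs : GXᵀ = GX := sylvester_symm hA hX hGX
    have hGX0 : GX ≠ 0 := by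
      rintro rfl
      rw [Matrix.mul_zero, Matrix.zero_mul, add_zero] at hGX
      exact hX0 hGX.symm
    have hp : 0 < (GXᵀ * A * GX).trace := trace_form_pos hA hGX0
    have e : (GX * (GX * A)).trace = (GXᵀ * A * GX).trace := by
      rw [hGXs, Matrix.trace_mul_comm, Matrix.mul_assoc]
    have : (GX * X).trace = 2 * (GXᵀ * A * GX).trace := by
      rw [← hGX, Matrix.mul_add, trace_add, ← Matrix.mul_assoc, e, hGXs]
      ring
    rw [this]; linarith
end

section
/- For any orthogonal matrix O, the map A ↦ OAO^T on symmetric positive definite matrices is an isometry of the Wasserstein metric: for symmetric X, Y, one has g_W at OAO^T of (OXO^T, OYO^T) equals g_W at A of (X, Y). -/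
open Matrix

lemma trace_transpose_mul_self_nonneg' {n : ℕ} (M : Matrix (Fin n) (Fin n) ℝ) :
    0 ≤ (Mᵀ * M).trace := by
  simp only [trace, diag, mul_apply, transpose_apply]
  exact Finset.sum_nonneg fun j _ => Finset.sum_nonneg fun i _ => mul_self_nonneg (M i j)

lemma eq_zero_of_trace_transpose_mul_self' {n : ℕ} (M : Matrix (Fin n) (Fin n) ℝ)
    (h : (Mᵀ * M).trace = 0) : M = 0 := by
  simp only [trace, diag, mul_apply, transpose_apply] at h
  ext i j
  have h1 := (Finset.sum_eq_zero_iff_of_nonneg (fun j (_ : j ∈ Finset.univ) =>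
    Finset.sum_nonneg fun i _ => mul_self_nonneg (M i j))).mp h j (Finset.mem_univ j)
  have h2 := (Finset.sum_eq_zero_iff_of_nonneg (fun i (_ : i ∈ Finset.univ) =>
    mul_self_nonneg (M i j))).mp h1 i (Finset.mem_univ i)
  simpa using mul_self_eq_zero.mp h2

/-- Uniqueness part of the Lyapunov equation: if `A` is positive definite and
`A Z + Z A = 0` then `Z = 0`. -/
lemma lyapunov_unique_aux {n : ℕ} {A Z : Matrix (Fin n) (Fin n) ℝ}
    (hA : A.PosDef) (h : A * Z + Z * A = 0) : Z = 0 := by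
  open MatrixOrder in
  set S := CFC.sqrt A with hS
  open MatrixOrder in
  have hSS : S * S = A := CFC.sqrt_mul_sqrt_self A hA.posSemidef.nonneg
  have hSt : Sᵀ = S := by
    open MatrixOrder in
    have : Sᴴ = S := (CFC.sqrt_nonneg A).posSemidef.isHermitian
    rw [Matrix.conjTranspose_eq_transpose_of_trivial] at this
    simpa [Matrix.IsHermitian, Matrix.conjTranspose] using this
  have key : ((S * Z)ᵀ * (S * Z)).trace + ((Z * S)ᵀ * (Z * S)).trace = 0 := by
    have h2 : Zᵀ * (A * Z) + Zᵀ * (Z * A) = 0 := by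
      rw [← Matrix.mul_add, h, Matrix.mul_zero]
    have htr := congrArg Matrix.trace h2
    simp only [trace_add, trace_zero] at htr
    have e1 : ((S * Z)ᵀ * (S * Z)).trace = (Zᵀ * (A * Z)).trace := by
      rw [Matrix.transpose_mul, hSt]
      rw [show Zᵀ * S * (S * Z) = Zᵀ * (A * Z) by rw [← hSS]; noncomm_ring]
    have e2 : ((Z * S)ᵀ * (Z * S)).trace = (Zᵀ * (Z * A)).trace := by
      rw [Matrix.transpose_mul, hSt]
      rw [show S * Zᵀ * (Z * S) = S * (Zᵀ * (Z * S)) by noncomm_ring,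
        Matrix.trace_mul_comm]
      rw [show Zᵀ * (Z * S) * S = Zᵀ * (Z * A) by rw [← hSS]; noncomm_ring]
    rw [e1, e2, htr]
  have h1 : ((S * Z)ᵀ * (S * Z)).trace = 0 := by
    have n1 := trace_transpose_mul_self_nonneg' (S * Z)
    have n2 := trace_transpose_mul_self_nonneg' (Z * S)
    linarith
  have hSZ : S * Z = 0 := eq_zero_of_trace_transpose_mul_self' _ h1
  have hAZ : A * Z = 0 := by rw [← hSS, Matrix.mul_assoc, hSZ, Matrix.mul_zero]
  obtain ⟨u, hu⟩ := hA.isUnit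
  have hinv : (↑u⁻¹ : Matrix (Fin n) (Fin n) ℝ) * (A * Z) = Z := by
    rw [← hu, ← Matrix.mul_assoc]
    rw [show ((↑u⁻¹ : Matrix (Fin n) (Fin n) ℝ) * ↑u) = 1 from u.inv_mul, Matrix.one_mul]
  rw [← hinv, hAZ, Matrix.mul_zero]

/-- The orthogonal action `A ↦ O A Oᵀ` is an isometry of the Wasserstein metric:
`g_W|_{OAOᵀ}(OXOᵀ, OYOᵀ) = g_W|_A(X,Y)`. -/
theorem wasserstein_orthogonal_isometry {n : ℕ}
    (A X Y O GY GY' : Matrix (Fin n) (Fin n) ℝ)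
    (hA : A.PosDef) (hO : Oᵀ * O = 1)
    (hX : Xᵀ = X) (hY : Yᵀ = Y)
    (hGY : A * GY + GY * A = Y)
    (hGY' : (O * A * Oᵀ) * GY' + GY' * (O * A * Oᵀ) = O * Y * Oᵀ) :
    (1/2) * (GY' * (O * X * Oᵀ)).trace = (1/2) * (GY * X).trace := by
  have hO' : O * Oᵀ = 1 := mul_eq_one_comm.mp hO
  have hZ : A * (Oᵀ * GY' * O) + (Oᵀ * GY' * O) * A = Y := by
    have e : A * (Oᵀ * GY' * O) + (Oᵀ * GY' * O) * A
        = Oᵀ * ((O * A * Oᵀ) * GY' + GY' * (O * A * Oᵀ)) * O := by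
      rw [Matrix.mul_add, Matrix.add_mul]
      rw [show Oᵀ * (O * A * Oᵀ * GY') * O = (Oᵀ * O) * (A * (Oᵀ * GY' * O)) from by
          noncomm_ring,
        show Oᵀ * (GY' * (O * A * Oᵀ)) * O = ((Oᵀ * GY' * O) * A) * (Oᵀ * O) from by
          noncomm_ring,
        hO, Matrix.one_mul, Matrix.mul_one]
    rw [e, hGY',
      show Oᵀ * (O * Y * Oᵀ) * O = (Oᵀ * O) * Y * (Oᵀ * O) from by noncomm_ring,
      hO, Matrix.one_mul, Matrix.mul_one]
  have hZG : Oᵀ * GY' * O = GY := by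
    have hdiff : A * (Oᵀ * GY' * O - GY) + (Oᵀ * GY' * O - GY) * A = 0 := by
      rw [Matrix.mul_sub, Matrix.sub_mul]
      rw [show A * (Oᵀ * GY' * O) - A * GY + ((Oᵀ * GY' * O) * A - GY * A)
          = (A * (Oᵀ * GY' * O) + (Oᵀ * GY' * O) * A) - (A * GY + GY * A) by abel,
        hZ, hGY, sub_self]
    exact sub_eq_zero.mp (lyapunov_unique_aux hA hdiff)
  have hGY'eq : GY' = O * GY * Oᵀ := by
    have e : O * (Oᵀ * GY' * O) * Oᵀ = (O * Oᵀ) * GY' * (O * Oᵀ) := by noncomm_ring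
    rw [← hZG, e, hO', Matrix.one_mul, Matrix.mul_one]
  rw [hGY'eq]
  congr 1
  calc (O * GY * Oᵀ * (O * X * Oᵀ)).trace
      = (O * (GY * ((Oᵀ * O) * (X * Oᵀ)))).trace := by
        rw [show O * GY * Oᵀ * (O * X * Oᵀ) = O * (GY * ((Oᵀ * O) * (X * Oᵀ))) from by
          noncomm_ring]
    _ = (O * (GY * (X * Oᵀ))).trace := by rw [hO, Matrix.one_mul]
    _ = (GY * (X * Oᵀ) * O).trace := Matrix.trace_mul_comm _ _
    _ = (GY * (X * (Oᵀ * O))).trace := by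
        rw [show GY * (X * Oᵀ) * O = GY * (X * (Oᵀ * O)) from by noncomm_ring]
    _ = (GY * X).trace := by rw [hO, Matrix.mul_one]
end
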